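/- The map F: P²(C) \ P²(R) → P²(R)*, F([u+iw]) = span_R(u,w), admits no continuous extension to any point of P²(R): for every v ∈ P²(R) and every real plane H ⊂ R³ containing v, there is a sequence x_n ∈ P²(C) \ P²(R) with F(x_n) = H and x_n → v. -/

import Mathlib

open scoped LinearAlgebra.Projectivization

/-- The quotient topology on a projectivization. -/
noncomputable instance : TopologicalSpace (ℙ ℂ (Fin 3 → ℂ)) :=
  instTopologicalSpaceQuotient

/-- The real part of a vector in `ℂ³`. -/
def reVec (v : Fin 3 → ℂ) : Fin 3 → ℝ := fun i => (v i).re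

/-- The imaginary part of a vector in `ℂ³`. -/
def imVec (v : Fin 3 → ℂ) : Fin 3 → ℝ := fun i => (v i).im

/-- The inclusion `ℝ³ → ℂ³`. -/
def toC (u : Fin 3 → ℝ) : Fin 3 → ℂ := fun i => (u i : ℂ)

/-- The set of real points `ℙ²(ℝ) ⊆ ℙ²(ℂ)`. -/
def realPoints : Set (ℙ ℂ (Fin 3 → ℂ)) :=
  {x | ∃ (u : Fin 3 → ℝ) (h : toC u ≠ 0), x = Projectivization.mk ℂ (toC u) h}

/-- The map `F : ℙ²(ℂ) ∖ ℙ²(ℝ) → ℙ²(ℝ)*`, `[u + iw] ↦ span_ℝ(u, w)`, admits no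
continuous extension to any real point: for every `v ∈ ℙ²(ℝ)` (represented by a real
vector `u`) and every real plane `H ⊆ ℝ³` containing `u`, there is a sequence of
points `x n ∈ ℙ²(ℂ) ∖ ℙ²(ℝ)` with `F (x n) = H` converging to `[u]`.  Since distinct
planes through `u` give different constant values of `F` along such sequences, `F`
cannot be extended continuously at `[u]`. -/
theorem spanMap_no_continuous_extension
    (u : Fin 3 → ℝ) (hu : toC u ≠ 0)
    (H : Submodule ℝ (Fin 3 → ℝ)) (hrank : Module.finrank ℝ H = 2) (huH : u ∈ H) :
    ∃ x : ℕ → ℙ ℂ (Fin 3 → ℂ),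
      (∀ n, x n ∉ realPoints ∧ ∃ (v : Fin 3 → ℂ) (hv : v ≠ 0),
        x n = Projectivization.mk ℂ v hv ∧ Submodule.span ℝ {reVec v, imVec v} = H) ∧
      Filter.Tendsto x Filter.atTop (nhds (Projectivization.mk ℂ (toC u) hu)) := by
  have hu0 : u ≠ 0 := by
    intro h
    apply hu
    funext i
    simp [toC, h]
  -- choose w ∈ H \ span {u}
  have hlt : Submodule.span ℝ {u} < H := by
    refine lt_of_le_of_ne ?_ ?_
    · rw [Submodule.span_le]; simpa using huH
    · intro h
      rw [← h, finrank_span_singleton hu0] at hrank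
      norm_num at hrank
  obtain ⟨w, hwH, hw⟩ := SetLike.exists_of_lt hlt
  -- span {u, w} = H
  have hspan : Submodule.span ℝ {u, w} = H := by
    apply Submodule.eq_of_le_of_finrank_le
    · rw [Submodule.span_le]
      rintro x (rfl | rfl)
      · exact huH
      · exact hwH
    · rw [hrank]
      have h1 : Submodule.span ℝ {u} < Submodule.span ℝ {u, w} := by
        refine lt_of_le_of_ne (Submodule.span_mono (by simp)) ?_
        intro h
        exact hw (h ▸ Submodule.subset_span (by simp))
      have h2 := Submodule.finrank_lt_finrank_of_lt h1
      rw [finrank_span_singleton hu0] at h2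
      omega
  -- the sequence of coefficients
  set c : ℕ → ℝ := fun n => ((n : ℝ) + 1)⁻¹ with hc
  have hcpos : ∀ n, 0 < c n := fun n => by positivity
  -- the sequence of vectors
  set v : ℕ → Fin 3 → ℂ := fun n i => (u i : ℂ) + (c n : ℂ) * Complex.I * (w i : ℂ)
    with hvdef
  have hre : ∀ n, reVec (v n) = u := by
    intro n
    funext i
    simp [reVec, hvdef]
  have him : ∀ n, imVec (v n) = c n • w := by
    intro n
    funext i
    simp [imVec, hvdef]
  have hvne : ∀ n, v n ≠ 0 := by
    intro n h
    apply hu0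
    rw [← hre n, h]
    funext i
    simp [reVec]
  refine ⟨fun n => Projectivization.mk ℂ (v n) (hvne n), fun n => ⟨?_, ?_⟩, ?_⟩
  · -- not a real point
    rintro ⟨u', hu', heq⟩
    rw [Projectivization.mk_eq_mk_iff'] at heq
    obtain ⟨a, ha⟩ := heq
    have hres : ∀ i, (v n) i = a * (u' i : ℂ) := by
      intro i
      have := congrFun ha i
      simpa [toC, Pi.smul_apply, smul_eq_mul] using this.symm
    have hreq : u = a.re • u' := by
      rw [← hre n]; funext i; simp [reVec, hres i, Complex.mul_re]
    have himq : c n • w = a.im • u' := by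
      rw [← him n]; funext i; simp [imVec, hres i, Complex.mul_im]
    have hare : a.re ≠ 0 := by
      intro h
      rw [h, zero_smul] at hreq
      exact hu0 hreq
    apply hw
    rw [Submodule.mem_span_singleton]
    refine ⟨(c n)⁻¹ * a.im * a.re⁻¹, ?_⟩
    have : w = (c n)⁻¹ • (a.im • u') := by
      rw [← himq, smul_smul, inv_mul_cancel₀ (hcpos n).ne', one_smul]
    rw [this, hreq, smul_smul, smul_smul]
    congr 1
    field_simp
  · -- value of F
    refine ⟨v n, hvne n, rfl, ?_⟩
    rw [hre, him, ← hspan]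
    have : ({u, c n • w} : Set (Fin 3 → ℝ)) = insert u {c n • w} := rfl
    rw [this, Submodule.span_insert, Submodule.span_singleton_smul_eq
      (IsUnit.mk0 _ (hcpos n).ne'), show ({u, w} : Set (Fin 3 → ℝ)) = insert u {w} from rfl,
      Submodule.span_insert]
  · -- convergence
    have hc0 : Filter.Tendsto c Filter.atTop (nhds 0) := by
      exact tendsto_one_div_add_atTop_nhds_zero_nat.congr (fun n => by rw [hc, one_div])
    have hcC : Filter.Tendsto (fun n => ((c n : ℂ))) Filter.atTop (nhds 0) := by
      have := (Complex.continuous_ofReal.tendsto (0 : ℝ)).comp hc0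
      simpa [Function.comp_def] using this
    have hv : Filter.Tendsto v Filter.atTop (nhds (toC u)) := by
      rw [tendsto_pi_nhds]
      intro i
      have : Filter.Tendsto (fun n => (u i : ℂ) + (c n : ℂ) * Complex.I * (w i : ℂ))
          Filter.atTop (nhds ((u i : ℂ) + 0 * Complex.I * (w i : ℂ))) := by
        exact tendsto_const_nhds.add (((hcC.mul tendsto_const_nhds)).mul tendsto_const_nhds)
      simpa [toC] using this
    have hsub : Filter.Tendsto (fun n => (⟨v n, hvne n⟩ : {z : Fin 3 → ℂ // z ≠ 0}))
        Filter.atTop (nhds ⟨toC u, hu⟩) := by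
      rw [tendsto_subtype_rng]
      exact hv
    exact (continuous_quotient_mk'.tendsto _).comp hsub
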